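/- For integers m ≥ 1 and k with gcd(m,k) = 1, the product over all complex λ with λ^{3m} = -1 of |1 + λ^m + λ^{2m} - λ^k(1 + λ^m)| equals 3^m + 4^m - 2·(2√3)^m · cos((2k - m)π/6). -/

import Mathlib

open Polynomial Real Complex

lemma exp_real_pow (θ : ℝ) (e : ℕ) :
    Complex.exp (θ * Complex.I) ^ e = Complex.exp (((e : ℝ) * θ : ℝ) * Complex.I) := by
  rw [← Complex.exp_nat_mul]; congr 1; push_cast; ring

lemma exp_real_zpow (θ : ℝ) (e : ℤ) :
    Complex.exp (θ * Complex.I) ^ e = Complex.exp (((e : ℝ) * θ : ℝ) * Complex.I) := by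
  rw [← Complex.exp_int_mul]; congr 1; push_cast; ring

lemma exp_real_add (a b : ℝ) :
    Complex.exp (a * Complex.I) * Complex.exp (b * Complex.I)
      = Complex.exp ((a + b : ℝ) * Complex.I) := by
  rw [← Complex.exp_add]; congr 1; push_cast; ring

lemma exp_shift (θ : ℝ) (q : ℤ) :
    Complex.exp ((θ + 2*π*q : ℝ) * Complex.I) = Complex.exp (θ * Complex.I) := by
  rw [show ((θ + 2*π*q : ℝ) : ℂ) * Complex.I
      = θ*Complex.I + q*(2*π*Complex.I) by push_cast; ring,
    Complex.exp_add, Complex.exp_int_mul_two_pi_mul_I, mul_one]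

lemma prod_geom {m : ℕ} (hm : 0 < m) {η : ℂ} (hη : IsPrimitiveRoot η m) (A B : ℂ) :
    ∏ t ∈ Finset.range m, (A - B * η ^ t) = A ^ m - B ^ m := by
  have h := congrArg (Polynomial.eval A) (X_pow_sub_C_eq_prod hη hm (rfl : B ^ m = B ^ m))
  simpa [Polynomial.eval_prod, mul_comm] using h.symm

lemma prod_range_three_mul {M : Type*} [CommMonoid M] (f : ℕ → M) (m : ℕ) :
    ∏ j ∈ Finset.range (3*m), f j
      = ∏ t ∈ Finset.range m, (f (3*t) * f (3*t+1) * f (3*t+2)) := by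
  induction m with
  | zero => simp
  | succ n ih =>
    rw [show 3*(n+1) = 3*n+1+1+1 by ring, Finset.prod_range_succ, Finset.prod_range_succ,
      Finset.prod_range_succ, ih, Finset.prod_range_succ, mul_assoc _ (f (3*n)),
      mul_assoc _ (f (3*n) * f (3*n+1))]

/-- For m ≥ 1, gcd(m,k) = 1, the product over all complex λ with λ^{3m} = -1 of
|1 + λ^m + λ^{2m} - λ^k(1 + λ^m)| equals 3^m + 4^m - 2·(2√3)^m·cos((2k-m)π/6). -/
theorem stmt_6 (m : ℕ) (hm : 1 ≤ m) (k : ℤ) (hmk : Int.gcd (m : ℤ) k = 1) :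
    ((X ^ (3 * m) + C 1 : ℂ[X]).roots.map
      (fun lam => ‖(1 + lam ^ m + lam ^ (2 * m) - lam ^ k * (1 + lam ^ m))‖)).prod
      = 3 ^ m + 4 ^ m
        - 2 * (2 * Real.sqrt 3) ^ m * Real.cos ((2 * (k : ℝ) - (m : ℝ)) * Real.pi / 6) := by
  have hm0 : m ≠ 0 := by omega
  have hmpos : 0 < m := hm
  have h3m0 : 3*m ≠ 0 := by omega
  have h3mpos : 0 < 3*m := by omega
  have hmR : (m:ℝ) ≠ 0 := Nat.cast_ne_zero.2 hm0
  set φ : ℝ := (2 * (k:ℝ) - (m:ℝ)) * π / 6 with hφ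
  set s : ℝ := π / (3*(m:ℝ)) with hs_def
  have hkey : (m:ℝ) * s = π/3 := by rw [hs_def]; field_simp
  have h6s : 6*s = 2*π/(m:ℝ) := by rw [hs_def]; field_simp; ring
  set f : ℕ → ℂ := fun j => Complex.exp ((((2*j+1 : ℕ) : ℝ) * s : ℝ) * Complex.I) with hf
  -- roots description
  have hzeta : Complex.exp ((s:ℝ) * Complex.I) ^ (3*m) = (-1 : ℂ) := by
    rw [exp_real_pow, show (((3*m:ℕ):ℝ) * s) = π by push_cast; linear_combination 3*hkey]
    exact Complex.exp_pi_mul_I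
  have hfac := X_pow_sub_C_eq_prod (Complex.isPrimitiveRoot_exp (3*m) h3m0) h3mpos hzeta
  have hroots : (X ^ (3*m) + C 1 : ℂ[X]).roots = (Multiset.range (3*m)).map f := by
    rw [show (X ^ (3*m) + C 1 : ℂ[X]) = X^(3*m) - C (-1) by rw [map_neg, sub_neg_eq_add],
      hfac, Finset.prod_eq_multiset_prod, Finset.range_val,
      show (fun i => (X:ℂ[X]) - C (Complex.exp (2*(π:ℝ)*Complex.I/((3*m : ℕ):ℂ))^i
          * Complex.exp ((s:ℝ) * Complex.I)))
        = (fun a => (X:ℂ[X]) - C a) ∘ (fun i => Complex.exp (2*(π:ℝ)*Complex.I/((3*m : ℕ):ℂ))^i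
          * Complex.exp ((s:ℝ) * Complex.I)) from rfl,
      ← Multiset.map_map, roots_multiset_prod_X_sub_C]
    apply Multiset.map_congr rfl
    intro i _
    rw [hf, ← Complex.exp_nat_mul, ← Complex.exp_add]
    congr 1
    have h3mC : ((3*m:ℕ):ℂ) ≠ 0 := Nat.cast_ne_zero.2 h3m0
    push_cast [hs_def]
    field_simp
  -- power computations
  have hfm : ∀ j : ℕ, f j ^ m
      = Complex.exp ((((m:ℝ) * (((2*j+1 : ℕ) : ℝ) * s)) : ℝ) * Complex.I) := by
    intro j; rw [hf]; exact exp_real_pow _ m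
  have hfk : ∀ j : ℕ, f j ^ k
      = Complex.exp ((((k:ℝ) * (((2*j+1 : ℕ) : ℝ) * s)) : ℝ) * Complex.I) := by
    intro j; rw [hf]; exact exp_real_zpow _ k
  have h0m : ∀ t : ℕ, f (3*t) ^ m = Complex.exp ((π/3 : ℝ) * Complex.I) := by
    intro t
    rw [hfm, show ((m:ℝ) * (((2*(3*t)+1 : ℕ) : ℝ) * s)) = π/3 + 2*π*((t:ℤ):ℝ) by
      push_cast; linear_combination (6*(t:ℝ)+1)*hkey]
    exact exp_shift _ _
  have h1m : ∀ t : ℕ, f (3*t+1) ^ m = -1 := by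
    intro t
    rw [hfm, show ((m:ℝ) * (((2*(3*t+1)+1 : ℕ) : ℝ) * s)) = π + 2*π*((t:ℤ):ℝ) by
      push_cast; linear_combination (6*(t:ℝ)+3)*hkey]
    rw [exp_shift]
    exact Complex.exp_pi_mul_I
  have h2m : ∀ t : ℕ, f (3*t+2) ^ m = Complex.exp ((5*π/3 : ℝ) * Complex.I) := by
    intro t
    rw [hfm, show ((m:ℝ) * (((2*(3*t+2)+1 : ℕ) : ℝ) * s)) = 5*π/3 + 2*π*((t:ℤ):ℝ) by
      push_cast; linear_combination (6*(t:ℝ)+5)*hkey]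
    exact exp_shift _ _
  -- the primitive root η
  have hηt : ∀ t : ℕ, (Complex.exp ((2*π/(m:ℝ) : ℝ) * Complex.I) ^ k) ^ t
      = Complex.exp (((((k*(t:ℤ) : ℤ)):ℝ) * (2*π/(m:ℝ)) : ℝ) * Complex.I) := by
    intro t
    rw [← zpow_natCast (Complex.exp ((2*π/(m:ℝ) : ℝ) * Complex.I) ^ k) t, ← zpow_mul,
      exp_real_zpow]
  have hη : IsPrimitiveRoot (Complex.exp ((2*π/(m:ℝ) : ℝ) * Complex.I) ^ k) m := by
    have h2 : Complex.exp (2*(π:ℝ)*Complex.I/((m:ℕ):ℂ))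
        = Complex.exp ((2*π/(m:ℝ) : ℝ) * Complex.I) := by
      congr 1; push_cast; ring
    have h := (Complex.isPrimitiveRoot_exp m hm0).zpow_of_gcd_eq_one k
      (by rwa [Int.gcd_comm] at hmk)
    rwa [h2] at h
  have hk0 : ∀ t : ℕ, f (3*t) ^ k
      = Complex.exp ((((k:ℝ)*s) : ℝ) * Complex.I)
        * (Complex.exp ((2*π/(m:ℝ) : ℝ) * Complex.I) ^ k) ^ t := by
    intro t
    rw [hfk, show ((k:ℝ) * (((2*(3*t)+1 : ℕ) : ℝ) * s))
        = (k:ℝ)*s + ((k*(t:ℤ) : ℤ):ℝ) * (2*π/(m:ℝ)) by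
      push_cast; linear_combination ((k:ℝ)*(t:ℝ))*h6s, ← exp_real_add, hηt t]
  have hk2 : ∀ t : ℕ, f (3*t+2) ^ k
      = Complex.exp (((5*(k:ℝ)*s) : ℝ) * Complex.I)
        * (Complex.exp ((2*π/(m:ℝ) : ℝ) * Complex.I) ^ k) ^ t := by
    intro t
    rw [hfk, show ((k:ℝ) * (((2*(3*t+2)+1 : ℕ) : ℝ) * s))
        = 5*(k:ℝ)*s + ((k*(t:ℤ) : ℤ):ℝ) * (2*π/(m:ℝ)) by
      push_cast; linear_combination ((k:ℝ)*(t:ℝ))*h6s, ← exp_real_add, hηt t]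
  -- values of the special exponentials
  have h3 : ((Real.sqrt 3 : ℝ) : ℂ)^2 = 3 := by
    rw [← Complex.ofReal_pow, Real.sq_sqrt (by norm_num : (3:ℝ) ≥ 0)]; norm_num
  have hu : Complex.exp ((π/3 : ℝ) * Complex.I)
      = 1/2 + ((Real.sqrt 3 : ℝ) : ℂ)/2 * Complex.I := by
    rw [Complex.exp_mul_I, ← Complex.ofReal_cos, ← Complex.ofReal_sin,
      Real.cos_pi_div_three, Real.sin_pi_div_three]
    push_cast; ring
  have hv : Complex.exp ((5*π/3 : ℝ) * Complex.I)
      = 1/2 - ((Real.sqrt 3 : ℝ) : ℂ)/2 * Complex.I := by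
    rw [show (5*π/3 : ℝ) = -(π/3) + 2*π*((1:ℤ):ℝ) by push_cast; ring, exp_shift,
      Complex.exp_mul_I, ← Complex.ofReal_cos, ← Complex.ofReal_sin,
      Real.cos_neg, Real.sin_neg, Real.cos_pi_div_three, Real.sin_pi_div_three]
    push_cast; ring
  have hw6 : Complex.exp ((π/6 : ℝ) * Complex.I)
      = ((Real.sqrt 3 : ℝ) : ℂ)/2 + 1/2 * Complex.I := by
    rw [Complex.exp_mul_I, ← Complex.ofReal_cos, ← Complex.ofReal_sin,
      Real.cos_pi_div_six, Real.sin_pi_div_six]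
    push_cast; ring
  have hw6' : Complex.exp ((-(π/6) : ℝ) * Complex.I)
      = ((Real.sqrt 3 : ℝ) : ℂ)/2 - 1/2 * Complex.I := by
    rw [Complex.exp_mul_I, ← Complex.ofReal_cos, ← Complex.ofReal_sin,
      Real.cos_neg, Real.sin_neg, Real.cos_pi_div_six, Real.sin_pi_div_six]
    push_cast; ring
  have hA2 : 1 + Complex.exp ((π/3 : ℝ) * Complex.I) + Complex.exp ((π/3 : ℝ) * Complex.I)^2
      = 2 * Complex.exp ((π/3 : ℝ) * Complex.I) := by
    rw [hu]; linear_combination (Complex.I^2/4)*h3 + (3/4)*Complex.I_sq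
  have hA'2 : 1 + Complex.exp ((5*π/3 : ℝ) * Complex.I)
      + Complex.exp ((5*π/3 : ℝ) * Complex.I)^2
      = 2 * Complex.exp ((5*π/3 : ℝ) * Complex.I) := by
    rw [hv]; linear_combination (Complex.I^2/4)*h3 + (3/4)*Complex.I_sq
  have h1u : 1 + Complex.exp ((π/3 : ℝ) * Complex.I)
      = ((Real.sqrt 3 : ℝ) : ℂ) * Complex.exp ((π/6 : ℝ) * Complex.I) := by
    rw [hu, hw6]; linear_combination (-(1:ℂ)/2)*h3
  have h1v : 1 + Complex.exp ((5*π/3 : ℝ) * Complex.I)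
      = ((Real.sqrt 3 : ℝ) : ℂ) * Complex.exp ((-(π/6) : ℝ) * Complex.I) := by
    rw [hv, hw6']; linear_combination (-(1:ℂ)/2)*h3
  -- the four m-th powers
  have hAm : (1 + Complex.exp ((π/3 : ℝ) * Complex.I)
        + Complex.exp ((π/3 : ℝ) * Complex.I)^2) ^ m
      = 2^m * Complex.exp ((((m:ℝ)*(π/3)) : ℝ) * Complex.I) := by
    rw [hA2, mul_pow, exp_real_pow]
  have hA'm : (1 + Complex.exp ((5*π/3 : ℝ) * Complex.I)
        + Complex.exp ((5*π/3 : ℝ) * Complex.I)^2) ^ m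
      = 2^m * Complex.exp ((((m:ℝ)*(5*π/3)) : ℝ) * Complex.I) := by
    rw [hA'2, mul_pow, exp_real_pow]
  have hBm : (Complex.exp ((((k:ℝ)*s) : ℝ) * Complex.I)
        * (1 + Complex.exp ((π/3 : ℝ) * Complex.I))) ^ m
      = ((Real.sqrt 3 : ℝ) : ℂ)^m
        * Complex.exp ((((k:ℝ)*(π/3) + (m:ℝ)*(π/6)) : ℝ) * Complex.I) := by
    rw [h1u, mul_pow, mul_pow, exp_real_pow, exp_real_pow,
      show ((m:ℝ)*((k:ℝ)*s)) = (k:ℝ)*(π/3) by linear_combination (k:ℝ)*hkey]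
    linear_combination (((Real.sqrt 3 : ℝ) : ℂ)^m) * exp_real_add ((k:ℝ)*(π/3)) ((m:ℝ)*(π/6))
  have hB'm : (Complex.exp (((5*(k:ℝ)*s) : ℝ) * Complex.I)
        * (1 + Complex.exp ((5*π/3 : ℝ) * Complex.I))) ^ m
      = ((Real.sqrt 3 : ℝ) : ℂ)^m
        * Complex.exp (((5*(k:ℝ)*(π/3) + (m:ℝ)*(-(π/6))) : ℝ) * Complex.I) := by
    rw [h1v, mul_pow, mul_pow, exp_real_pow, exp_real_pow,
      show ((m:ℝ)*(5*(k:ℝ)*s)) = 5*(k:ℝ)*(π/3) by linear_combination (5*(k:ℝ))*hkey]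
    linear_combination (((Real.sqrt 3 : ℝ) : ℂ)^m)
      * exp_real_add (5*(k:ℝ)*(π/3)) ((m:ℝ)*(-(π/6)))
  -- exponential product identities
  have e1 : Complex.exp ((((m:ℝ)*(π/3)) : ℝ) * Complex.I)
      * Complex.exp ((((m:ℝ)*(5*π/3)) : ℝ) * Complex.I) = 1 := by
    rw [exp_real_add, show ((m:ℝ)*(π/3) + (m:ℝ)*(5*π/3) : ℝ) = 0 + 2*π*((m:ℤ):ℝ) by
      push_cast; ring, exp_shift]
    simp
  have e2 : Complex.exp ((((m:ℝ)*(π/3)) : ℝ) * Complex.I)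
      * Complex.exp (((5*(k:ℝ)*(π/3) + (m:ℝ)*(-(π/6))) : ℝ) * Complex.I)
      = Complex.exp ((-φ : ℝ) * Complex.I) := by
    rw [exp_real_add, show ((m:ℝ)*(π/3) + (5*(k:ℝ)*(π/3) + (m:ℝ)*(-(π/6))) : ℝ)
      = -φ + 2*π*((k:ℤ):ℝ) by rw [hφ]; push_cast; ring, exp_shift]
  have e3 : Complex.exp ((((k:ℝ)*(π/3) + (m:ℝ)*(π/6)) : ℝ) * Complex.I)
      * Complex.exp ((((m:ℝ)*(5*π/3)) : ℝ) * Complex.I)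
      = Complex.exp ((φ : ℝ) * Complex.I) := by
    rw [exp_real_add, show (((k:ℝ)*(π/3) + (m:ℝ)*(π/6)) + (m:ℝ)*(5*π/3) : ℝ)
      = φ + 2*π*((m:ℤ):ℝ) by rw [hφ]; push_cast; ring, exp_shift]
  have e4 : Complex.exp ((((k:ℝ)*(π/3) + (m:ℝ)*(π/6)) : ℝ) * Complex.I)
      * Complex.exp (((5*(k:ℝ)*(π/3) + (m:ℝ)*(-(π/6))) : ℝ) * Complex.I) = 1 := by
    rw [exp_real_add, show (((k:ℝ)*(π/3) + (m:ℝ)*(π/6))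
        + (5*(k:ℝ)*(π/3) + (m:ℝ)*(-(π/6))) : ℝ) = 0 + 2*π*((k:ℤ):ℝ) by push_cast; ring,
      exp_shift]
    simp
  have hcos : Complex.exp ((φ : ℝ) * Complex.I) + Complex.exp ((-φ : ℝ) * Complex.I)
      = 2 * ((Real.cos φ : ℝ) : ℂ) := by
    rw [Complex.exp_mul_I, Complex.exp_mul_I]
    push_cast
    rw [Complex.cos_neg, Complex.sin_neg]
    ring
  have hr : ((Real.sqrt 3 : ℝ) : ℂ)^m * ((Real.sqrt 3 : ℝ) : ℂ)^m = 3^m := by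
    rw [← mul_pow, ← pow_two, h3]
  have h4 : (2:ℂ)^m * 2^m = 4^m := by rw [← mul_pow]; norm_num
  have h2r : ((2:ℂ) * ((Real.sqrt 3 : ℝ) : ℂ))^m = 2^m * ((Real.sqrt 3 : ℝ) : ℂ)^m :=
    mul_pow _ _ m
  -- the total complex product
  have hQ : ((1 + Complex.exp ((π/3 : ℝ) * Complex.I)
          + Complex.exp ((π/3 : ℝ) * Complex.I)^2) ^ m
        - (Complex.exp ((((k:ℝ)*s) : ℝ) * Complex.I)
          * (1 + Complex.exp ((π/3 : ℝ) * Complex.I))) ^ m)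
      * ((1 + Complex.exp ((5*π/3 : ℝ) * Complex.I)
          + Complex.exp ((5*π/3 : ℝ) * Complex.I)^2) ^ m
        - (Complex.exp (((5*(k:ℝ)*s) : ℝ) * Complex.I)
          * (1 + Complex.exp ((5*π/3 : ℝ) * Complex.I))) ^ m)
      = (((3 ^ m + 4 ^ m - 2 * (2 * Real.sqrt 3) ^ m * Real.cos φ : ℝ)) : ℂ) := by
    rw [hAm, hA'm, hBm, hB'm]
    push_cast at e1 e2 e3 e4 hcos ⊢
    linear_combination ((2:ℂ)^m*2^m)*e1
      - (2^m*((Real.sqrt 3 : ℝ) : ℂ)^m)*e2 - (2^m*((Real.sqrt 3 : ℝ) : ℂ)^m)*e3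
      + (((Real.sqrt 3 : ℝ) : ℂ)^m*((Real.sqrt 3 : ℝ) : ℂ)^m)*e4
      - (2^m*((Real.sqrt 3 : ℝ) : ℂ)^m)*hcos + hr + h4
      + 2*(Complex.cos ((φ:ℝ):ℂ))*h2r
  -- nonnegativity of the RHS
  have hR0 : (0:ℝ) ≤ 3 ^ m + 4 ^ m - 2 * (2 * Real.sqrt 3) ^ m * Real.cos φ := by
    have h1 : Real.sqrt 3 ^ m * Real.sqrt 3 ^ m = 3^m := by
      rw [← mul_pow, Real.mul_self_sqrt (by norm_num : (0:ℝ) ≤ 3)]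
    have h2 : (2:ℝ)^m * 2^m = 4^m := by rw [← mul_pow]; norm_num
    have h3' : ((2:ℝ) * Real.sqrt 3)^m = 2^m * Real.sqrt 3 ^ m := mul_pow _ _ m
    nlinarith [Real.cos_le_one φ, pow_nonneg (Real.sqrt_nonneg 3) m,
      pow_nonneg (by norm_num : (0:ℝ) ≤ 2) m,
      sq_nonneg (Real.sqrt 3 ^ m - 2 ^ m),
      mul_nonneg (pow_nonneg (by positivity : (0:ℝ) ≤ 2*Real.sqrt 3) m)
        (sub_nonneg.2 (Real.cos_le_one φ))]
  -- main computation
  rw [hroots, Multiset.map_map, ← Finset.range_val, ← Finset.prod_eq_multiset_prod]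
  simp only [Function.comp_apply]
  rw [← Complex.norm_prod]
  rw [prod_range_three_mul
    (fun j => 1 + f j ^ m + f j ^ (2*m) - f j ^ k * (1 + f j ^ m)) m]
  have hstep : ∀ t ∈ Finset.range m,
      (1 + f (3*t) ^ m + f (3*t) ^ (2*m) - f (3*t) ^ k * (1 + f (3*t) ^ m)) *
      (1 + f (3*t+1) ^ m + f (3*t+1) ^ (2*m) - f (3*t+1) ^ k * (1 + f (3*t+1) ^ m)) *
      (1 + f (3*t+2) ^ m + f (3*t+2) ^ (2*m) - f (3*t+2) ^ k * (1 + f (3*t+2) ^ m))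
      = ((1 + Complex.exp ((π/3 : ℝ) * Complex.I)
            + Complex.exp ((π/3 : ℝ) * Complex.I)^2)
          - (Complex.exp ((((k:ℝ)*s) : ℝ) * Complex.I)
            * (1 + Complex.exp ((π/3 : ℝ) * Complex.I)))
            * (Complex.exp ((2*π/(m:ℝ) : ℝ) * Complex.I) ^ k) ^ t)
        * ((1 + Complex.exp ((5*π/3 : ℝ) * Complex.I)
            + Complex.exp ((5*π/3 : ℝ) * Complex.I)^2)
          - (Complex.exp (((5*(k:ℝ)*s) : ℝ) * Complex.I)
            * (1 + Complex.exp ((5*π/3 : ℝ) * Complex.I)))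
            * (Complex.exp ((2*π/(m:ℝ) : ℝ) * Complex.I) ^ k) ^ t) := by
    intro t _
    rw [show 2*m = m*2 from mul_comm 2 m]
    simp only [pow_mul]
    rw [h0m t, h1m t, h2m t, hk0 t, hk2 t]
    ring
  rw [Finset.prod_congr rfl hstep, Finset.prod_mul_distrib,
    prod_geom hmpos hη, prod_geom hmpos hη, hQ, Complex.norm_real, Real.norm_eq_abs, _root_.abs_of_nonneg hR0]
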